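/- For |q|<1, the generating function of restricted overpartitions satisfies ∑_{n≥0} (−q^{2n+3};q²)_∞ q^{2n+1}/(q^{2n+2},q^{2n+3};q²)_∞ + ∑_{n≥1} (−q^{2n+1};q²)_∞ q^{2n}/(q^{2n},q^{2n+1};q²)_∞ = (q(−q;q²)_∞/(q²,q³;q²)_∞)·∑_{n≥0} (q²,q³;q²)_n q^{2n}/(−q³;q²)_n. -/

import Mathlib

open scoped BigOperators

/-- The finite q-Pochhammer symbol `(a;q)_n = ∏_{j=0}^{n-1} (1 - a q^j)`. -/
noncomputable def qPoch (a q : ℂ) (n : ℕ) : ℂ := ∏ j ∈ Finset.range n, (1 - a * q ^ j)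

/-- The infinite q-Pochhammer symbol `(a;q)_∞ = ∏_{j=0}^{∞} (1 - a q^j)`. -/
noncomputable def qPochInf (a q : ℂ) : ℂ := ∏' j : ℕ, (1 - a * q ^ j)

lemma aux_one_sub_ne {x : ℂ} (hx : ‖x‖ < 1) : (1 : ℂ) - x ≠ 0 := by
  intro h
  have : (1 : ℂ) = x := by linear_combination h
  rw [← this] at hx
  simp at hx

lemma aux_multipliable {a Q : ℂ} (hQ : ‖Q‖ < 1)
    (hne : ∀ j : ℕ, (1 : ℂ) - a * Q ^ j ≠ 0) :
    Multipliable (fun j : ℕ ↦ 1 - a * Q ^ j) := by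
  refine Complex.multipliable_of_summable_log ?_
  have hsum : Summable (fun j : ℕ ↦ (3 / 2 : ℝ) * (‖a‖ * ‖Q‖ ^ j)) :=
    ((summable_geometric_of_lt_one (norm_nonneg Q) hQ).mul_left ‖a‖).mul_left _
  apply Summable.of_norm_bounded_eventually_nat hsum
  have htend : Filter.Tendsto (fun j : ℕ ↦ ‖a‖ * ‖Q‖ ^ j) Filter.atTop (nhds 0) := by
    simpa using (tendsto_pow_atTop_nhds_zero_of_norm_lt_one
      (by simpa using hQ)).const_mul ‖a‖
  have hev : ∀ᶠ j : ℕ in Filter.atTop, ‖a‖ * ‖Q‖ ^ j ≤ 1 / 2 :=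
    htend.eventually (eventually_le_nhds (by norm_num : (0:ℝ) < 1/2))
  filter_upwards [hev] with j hj
  have hb : ‖a * Q ^ j‖ ≤ ‖a‖ * ‖Q‖ ^ j := by rw [norm_mul, norm_pow]
  have h12 : ‖-(a * Q ^ j)‖ ≤ 1 / 2 := by rw [norm_neg]; exact hb.trans hj
  have := Complex.norm_log_one_add_half_le_self h12
  rw [show (1 : ℂ) + -(a * Q ^ j) = 1 - a * Q ^ j by ring, norm_neg] at this
  calc ‖Complex.log (1 - a * Q ^ j)‖ ≤ 3 / 2 * ‖a * Q ^ j‖ := this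
    _ ≤ 3 / 2 * (‖a‖ * ‖Q‖ ^ j) := by nlinarith [hb]

lemma aux_split {a Q : ℂ} (hQ : ‖Q‖ < 1)
    (hne : ∀ j : ℕ, (1 : ℂ) - a * Q ^ j ≠ 0) (n : ℕ) :
    qPochInf a Q = qPoch a Q n * qPochInf (a * Q ^ n) Q := by
  have hm : Multipliable (fun j : ℕ ↦ 1 - (a * Q ^ n) * Q ^ j) := by
    refine aux_multipliable hQ (fun j ↦ ?_)
    have := hne (n + j)
    rwa [pow_add, ← mul_assoc] at this
  have h2 : Multipliable (fun j : ℕ ↦ 1 - a * Q ^ (j + n)) := by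
    have he : (fun j : ℕ ↦ 1 - a * Q ^ (j + n)) = fun j ↦ 1 - (a * Q ^ n) * Q ^ j :=
      funext fun j ↦ by rw [pow_add]; ring
    rw [he]; exact hm
  unfold qPochInf qPoch
  refine (Multipliable.prod_mul_tprod_nat_mul' (f := fun j : ℕ ↦ 1 - a * Q ^ j) (k := n) h2).symm.trans ?_
  congr 1
  exact tprod_congr fun j ↦ by rw [pow_add]; ring


/-- For 0<|q|<1,
`∑_{n≥0} (-q^{2n+3};q²)_∞ q^{2n+1}/(q^{2n+2},q^{2n+3};q²)_∞
  + ∑_{n≥1} (-q^{2n+1};q²)_∞ q^{2n}/(q^{2n},q^{2n+1};q²)_∞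
  = (q (-q;q²)_∞/(q²,q³;q²)_∞) ∑_{n≥0} (q²,q³;q²)_n q^{2n}/(-q³;q²)_n`. -/
theorem stmt_13 (q : ℂ) (hq0 : q ≠ 0) (hq : ‖q‖ < 1) :
    (∑' n : ℕ, qPochInf (-q ^ (2 * n + 3)) (q ^ 2) * q ^ (2 * n + 1) /
        (qPochInf (q ^ (2 * n + 2)) (q ^ 2) * qPochInf (q ^ (2 * n + 3)) (q ^ 2)))
    + (∑' n : ℕ, qPochInf (-q ^ (2 * (n + 1) + 1)) (q ^ 2) * q ^ (2 * (n + 1)) /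
        (qPochInf (q ^ (2 * (n + 1))) (q ^ 2) * qPochInf (q ^ (2 * (n + 1) + 1)) (q ^ 2)))
      = q * qPochInf (-q) (q ^ 2) / (qPochInf (q ^ 2) (q ^ 2) * qPochInf (q ^ 3) (q ^ 2)) *
          ∑' n : ℕ, qPoch (q ^ 2) (q ^ 2) n * qPoch (q ^ 3) (q ^ 2) n * q ^ (2 * n) /
            qPoch (-q ^ 3) (q ^ 2) n := by
  have hQ : ‖q ^ 2‖ < 1 := by
    rw [norm_pow]
    calc ‖q‖ ^ 2 ≤ ‖q‖ ^ 1 := pow_le_pow_of_le_one (norm_nonneg q) hq.le (by omega)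
      _ = ‖q‖ := pow_one _
      _ < 1 := hq
  -- norms of q^k * (q^2)^j for k ≥ 1
  have hnorm : ∀ k j : ℕ, 1 ≤ k → ‖q ^ k * (q ^ 2) ^ j‖ < 1 := by
    intro k j hk
    rw [← pow_mul, ← pow_add, norm_pow]
    calc ‖q‖ ^ (k + 2 * j) ≤ ‖q‖ ^ 1 := pow_le_pow_of_le_one (norm_nonneg q) hq.le (by omega)
      _ = ‖q‖ := pow_one _
      _ < 1 := hq
  have hnePos : ∀ k : ℕ, 1 ≤ k → ∀ j : ℕ, (1 : ℂ) - (q ^ k) * (q ^ 2) ^ j ≠ 0 := by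
    intro k hk j
    exact aux_one_sub_ne (hnorm k j hk)
  have hneNeg : ∀ k : ℕ, 1 ≤ k → ∀ j : ℕ, (1 : ℂ) - (-q ^ k) * (q ^ 2) ^ j ≠ 0 := by
    intro k hk j
    apply aux_one_sub_ne
    rw [neg_mul, norm_neg]
    exact hnorm k j hk
  have h1q : (1 : ℂ) + q ≠ 0 := by
    have := aux_one_sub_ne (x := -q) (by simpa using hq)
    simpa [sub_neg_eq_add] using this
  -- finite products are nonzero
  have hpochPos : ∀ k m : ℕ, 1 ≤ k → qPoch (q ^ k) (q ^ 2) m ≠ 0 := by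
    intro k m hk
    exact Finset.prod_ne_zero_iff.mpr fun j _ ↦ hnePos k hk j
  have hpochNeg : ∀ k m : ℕ, 1 ≤ k → qPoch (-q ^ k) (q ^ 2) m ≠ 0 := by
    intro k m hk
    exact Finset.prod_ne_zero_iff.mpr fun j _ ↦ hneNeg k hk j
  -- key termwise identity
  have key : ∀ n : ℕ, qPochInf (-q ^ (2 * n + 3)) (q ^ 2) * q ^ (2 * n + 1) /
      (qPochInf (q ^ (2 * n + 2)) (q ^ 2) * qPochInf (q ^ (2 * n + 3)) (q ^ 2))
      = (q * qPochInf (-q) (q ^ 2) /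
          (qPochInf (q ^ 2) (q ^ 2) * qPochInf (q ^ 3) (q ^ 2)) / (1 + q)) *
        (qPoch (q ^ 2) (q ^ 2) n * qPoch (q ^ 3) (q ^ 2) n * q ^ (2 * n) /
          qPoch (-q ^ 3) (q ^ 2) n) := by
    intro n
    have hA : qPochInf (-q) (q ^ 2)
        = qPoch (-q) (q ^ 2) (n + 1) * qPochInf (-q ^ (2 * n + 3)) (q ^ 2) := by
      have := aux_split (a := -q) (Q := q ^ 2) hQ
        (fun j ↦ by simpa using hneNeg 1 le_rfl j) (n + 1)
      rwa [show -q * (q ^ 2) ^ (n + 1) = -q ^ (2 * n + 3) by ring] at this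
    have hB : qPochInf (q ^ 2) (q ^ 2)
        = qPoch (q ^ 2) (q ^ 2) n * qPochInf (q ^ (2 * n + 2)) (q ^ 2) := by
      have := aux_split (a := q ^ 2) (Q := q ^ 2) hQ (hnePos 2 (by omega)) n
      rwa [show q ^ 2 * (q ^ 2) ^ n = q ^ (2 * n + 2) by ring] at this
    have hC : qPochInf (q ^ 3) (q ^ 2)
        = qPoch (q ^ 3) (q ^ 2) n * qPochInf (q ^ (2 * n + 3)) (q ^ 2) := by
      have := aux_split (a := q ^ 3) (Q := q ^ 2) hQ (hnePos 3 (by omega)) n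
      rwa [show q ^ 3 * (q ^ 2) ^ n = q ^ (2 * n + 3) by ring] at this
    have hp : qPoch (-q) (q ^ 2) (n + 1) = (1 + q) * qPoch (-q ^ 3) (q ^ 2) n := by
      unfold qPoch
      rw [Finset.prod_range_succ']
      have hcong : ∀ j ∈ Finset.range n,
          (1 : ℂ) - (-q) * (q ^ 2) ^ (j + 1) = 1 - (-q ^ 3) * (q ^ 2) ^ j := by
        intro j _; ring
      rw [Finset.prod_congr rfl hcong]
      ring
    rw [hA, hB, hC, hp]
    set I1 := qPochInf (-q ^ (2 * n + 3)) (q ^ 2)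
    set I2 := qPochInf (q ^ (2 * n + 2)) (q ^ 2)
    set I3 := qPochInf (q ^ (2 * n + 3)) (q ^ 2)
    set p2 := qPoch (q ^ 2) (q ^ 2) n
    set p3 := qPoch (q ^ 3) (q ^ 2) n
    set p4 := qPoch (-q ^ 3) (q ^ 2) n
    have hp2 : p2 ≠ 0 := hpochPos 2 n (by omega)
    have hp3 : p3 ≠ 0 := hpochPos 3 n (by omega)
    have hp4 : p4 ≠ 0 := hpochNeg 3 n (by omega)
    by_cases hI2 : I2 = 0
    · simp [hI2]
    by_cases hI3 : I3 = 0
    · simp [hI3]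
    rw [div_div, div_mul_div_comm, div_eq_div_iff (mul_ne_zero hI2 hI3)
      (mul_ne_zero (mul_ne_zero (mul_ne_zero (mul_ne_zero hp2 hI2) (mul_ne_zero hp3 hI3)) h1q)
        hp4)]
    ring
  -- the second sum is q times the first, termwise
  have h2 : ∀ n : ℕ, qPochInf (-q ^ (2 * (n + 1) + 1)) (q ^ 2) * q ^ (2 * (n + 1)) /
      (qPochInf (q ^ (2 * (n + 1))) (q ^ 2) * qPochInf (q ^ (2 * (n + 1) + 1)) (q ^ 2))
      = q * (qPochInf (-q ^ (2 * n + 3)) (q ^ 2) * q ^ (2 * n + 1) /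
        (qPochInf (q ^ (2 * n + 2)) (q ^ 2) * qPochInf (q ^ (2 * n + 3)) (q ^ 2))) := by
    intro n
    rw [show 2 * (n + 1) + 1 = 2 * n + 3 by ring, show 2 * (n + 1) = 2 * n + 2 by ring]
    ring
  rw [tsum_congr h2, tsum_mul_left, tsum_congr key, tsum_mul_left]
  set S := ∑' n : ℕ, qPoch (q ^ 2) (q ^ 2) n * qPoch (q ^ 3) (q ^ 2) n * q ^ (2 * n) /
    qPoch (-q ^ 3) (q ^ 2) n
  set P := q * qPochInf (-q) (q ^ 2) / (qPochInf (q ^ 2) (q ^ 2) * qPochInf (q ^ 3) (q ^ 2))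
  field_simp
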